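/- Let M be an infinite compact metrizable abelian topological group such that either (i) the torsion subgroup t(M) satisfies |t(M)| < 𝔠, or (ii) there is a prime p with p·x = 0 for all x ∈ M. Then M admits a dense subgroup D that is not Haar-measurable and satisfies |M/D| = 𝔠. -/

import Mathlib

open MeasureTheory Cardinal Set Submodule
open scoped ENNReal

universe u

section Aux

/-- Linear independence from a well-ordered "outside span of predecessors" condition. -/
theorem stmt7_li_of_wf {ι : Type*} [LinearOrder ι] [WellFoundedLT ι] {K : Type} [DivisionRing K]
    {V : Type u} [AddCommGroup V] [Module K V] (v : ι → V)
    (hv : ∀ p, v p ∉ span K (v '' Set.Iio p)) : LinearIndependent K v := by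
  classical
  rw [linearIndependent_iff']
  suffices H : ∀ s : Finset ι, ∀ g : ι → K, ∑ i ∈ s, g i • v i = 0 → ∀ i ∈ s, g i = 0 from
    fun s g h i hi => H s g h i hi
  intro s
  induction s using Finset.strongInduction with
  | _ s ih =>
    intro g hsum i hi
    have hne : s.Nonempty := ⟨i, hi⟩
    set m := s.max' hne with hm
    have hmem : m ∈ s := s.max'_mem hne
    have herase : ∑ j ∈ s.erase m, g j • v j ∈ span K (v '' Set.Iio m) :=
      Submodule.sum_mem _ fun j hj => Submodule.smul_mem _ _ (Submodule.subset_span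
        ⟨j, lt_of_le_of_ne (s.le_max' j (Finset.mem_of_mem_erase hj)) (Finset.ne_of_mem_erase hj),
          rfl⟩)
    have hadd : g m • v m + ∑ j ∈ s.erase m, g j • v j = 0 := by
      rwa [Finset.add_sum_erase s (fun j => g j • v j) hmem]
    have hgm : g m = 0 := by
      by_contra hgm
      apply hv m
      have h1 : v m = (g m)⁻¹ • (g m • v m) := by rw [smul_smul, inv_mul_cancel₀ hgm, one_smul]
      have h2 : g m • v m = -∑ j ∈ s.erase m, g j • v j := eq_neg_of_add_eq_zero_left hadd
      rw [h1, h2]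
      exact Submodule.smul_mem _ _ (neg_mem herase)
    have hsum' : ∑ j ∈ s.erase m, g j • v j = 0 := by
      rwa [hgm, zero_smul, zero_add] at hadd
    rcases eq_or_ne i m with rfl | hne2
    · exact hgm
    · exact ih (s.erase m) (Finset.erase_ssubset hmem) g hsum' i (Finset.mem_erase.mpr ⟨hne2, hi⟩)

theorem stmt7_mk_span_le {K : Type} [DivisionRing K] [Countable K] {V : Type u} [AddCommGroup V]
    [Module K V] (s : Set V) : #(span K s : Set V) ≤ max ℵ₀ #s := by
  classical
  have hmem : ∀ l : List (ULift.{u} K × s),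
      (l.map fun p => p.1.down • (p.2 : V)).sum ∈ span K s := by
    intro l
    induction l with
    | nil => simp
    | cons a l ih =>
      simp only [List.map_cons, List.sum_cons]
      exact add_mem (Submodule.smul_mem _ _ (Submodule.subset_span a.2.2)) ih
  have hsurj : Function.Surjective
      (fun l : List (ULift.{u} K × s) =>
        (⟨(l.map fun p => p.1.down • (p.2 : V)).sum, hmem l⟩ : (span K s : Set V))) := by
    rintro ⟨x, hx⟩
    obtain ⟨n, c, gg, hcg⟩ := Submodule.mem_span_set'.mp hx
    refine ⟨List.ofFn fun i => (ULift.up (c i), gg i), ?_⟩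
    apply Subtype.ext
    simp only [List.map_ofFn]
    rw [List.sum_ofFn]
    simpa using hcg
  calc #(span K s : Set V) ≤ #(List (ULift.{u} K × s)) := Cardinal.mk_le_of_surjective hsurj
    _ ≤ max ℵ₀ #(ULift.{u} K × s) := Cardinal.mk_list_le_max _
    _ ≤ max ℵ₀ (ℵ₀ * #s) := by
        apply max_le (le_max_left _ _)
        refine le_trans ?_ (le_max_right _ _)
        rw [Cardinal.mk_prod, Cardinal.lift_id, Cardinal.lift_id]
        exact mul_le_mul' Cardinal.mk_le_aleph0 le_rfl
    _ ≤ max ℵ₀ #s := by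
        apply max_le (le_max_left _ _)
        calc ℵ₀ * #s ≤ max (max ℵ₀ #s) ℵ₀ := Cardinal.mul_le_max _ _
          _ = max ℵ₀ #s := max_eq_left (le_max_left _ _)

theorem stmt7_mk_cl_lt {M : Type u} [AddCommGroup M] {K : Type} [DivisionRing K] [Countable K]
    {V : Type u} [AddCommGroup V] [Module K V] (φ : M →+ V)
    (hker : #(φ ⁻¹' {0} : Set M) < Cardinal.continuum)
    (P : Set M) (hP : #P < Cardinal.continuum) :
    #({m : M | φ m ∈ span K (φ '' P)} : Set M) < Cardinal.continuum := by
  classical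
  set S := {m : M | φ m ∈ span K (φ '' P)} with hS
  set uu : V → M := fun w => if h : ∃ m, m ∈ S ∧ φ m = w then h.choose else 0 with huu
  have huu' : ∀ m ∈ S, φ (uu (φ m)) = φ m := by
    intro m hm
    have h : ∃ m', m' ∈ S ∧ φ m' = φ m := ⟨m, hm, rfl⟩
    simp only [huu, dif_pos h]
    exact h.choose_spec.2
  have hinj : Function.Injective (fun m : S =>
      ((⟨φ m, m.2⟩, ⟨m.1 - uu (φ m.1), by
          simp only [Set.mem_preimage, Set.mem_singleton_iff, map_sub, huu' m.1 m.2, sub_self]⟩) :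
        (span K (φ '' P) : Set V) × (φ ⁻¹' {0} : Set M))) := by
    rintro ⟨m1, h1⟩ ⟨m2, h2⟩ h
    have e1 : φ m1 = φ m2 := congrArg (fun z => (z.1 : V)) h
    have e2 : m1 - uu (φ m1) = m2 - uu (φ m2) := congrArg (fun z => (z.2 : M)) h
    rw [e1] at e2
    exact Subtype.ext (sub_left_inj.mp e2)
  have hle := Cardinal.mk_le_of_injective hinj
  rw [Cardinal.mk_prod, Cardinal.lift_id, Cardinal.lift_id] at hle
  refine lt_of_le_of_lt hle (Cardinal.mul_lt_of_lt Cardinal.aleph0_le_continuum ?_ hker)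
  refine lt_of_le_of_lt (stmt7_mk_span_le _) ?_
  exact max_lt Cardinal.aleph0_lt_continuum (lt_of_le_of_lt Cardinal.mk_image_le hP)

end Aux

theorem stmt7_core {M : Type u} [AddCommGroup M] [TopologicalSpace M] [IsTopologicalAddGroup M]
    [CompactSpace M] [T2Space M] [TopologicalSpace.MetrizableSpace M] [Infinite M]
    [MeasurableSpace M] [BorelSpace M]
    (μ : Measure M) [μ.IsAddHaarMeasure] (hμ : μ Set.univ = 1)
    {K : Type} [Field K] [Countable K] {V : Type u} [AddCommGroup V] [Module K V]
    (φ : M →+ V) (hker : #(φ ⁻¹' {0} : Set M) < Cardinal.continuum) :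
    ∃ D : AddSubgroup M, Dense (D : Set M) ∧ ¬ NullMeasurableSet (D : Set M) μ ∧
      Cardinal.mk (M ⧸ D) = Cardinal.continuum := by
  classical
  haveI : PolishSpace M := by
    letI := TopologicalSpace.metrizableSpaceMetric M
    infer_instance
  haveI hnb : (nhdsWithin (0 : M) {(0 : M)}ᶜ).NeBot := by
    by_contra h
    rw [Filter.not_neBot] at h
    have h0 : IsOpen ({0} : Set M) := (isOpen_singleton_iff_punctured_nhds (0 : M)).mpr h
    have hall : ∀ x : M, IsOpen ({x} : Set M) := by
      intro x
      have := (Homeomorph.addLeft x).isOpenMap _ h0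
      simpa using this
    have : DiscreteTopology M := discreteTopology_iff_isOpen_singleton.mpr hall
    exact (finite_of_compact_of_discrete (X := M)).not_infinite ‹_›
  haveI : NullSingletonClass μ := inferInstance
  have huniv : 0 < μ Set.univ := by rw [hμ]; exact zero_lt_one
  have harr : #(ℕ → Bool) = Cardinal.continuum := by
    rw [← Cardinal.power_def, Cardinal.mk_bool, Cardinal.mk_nat, Cardinal.two_power_aleph0]
  -- every closed set of positive measure has at least continuum many elements
  have hbig : ∀ C : Set M, IsClosed C → 0 < μ C → Cardinal.continuum ≤ #C := by
    intro C hC hpos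
    have hunc : ¬ C.Countable := by
      intro h
      rw [h.measure_zero μ] at hpos
      exact lt_irrefl _ hpos
    obtain ⟨f, hfr, -, hfi⟩ := hC.exists_nat_bool_injection_of_not_countable hunc
    have hle : Cardinal.lift.{u} #(ℕ → Bool) ≤ Cardinal.lift.{0} #C :=
      Cardinal.lift_mk_le'.mpr ⟨⟨fun y => ⟨f y, hfr ⟨y, rfl⟩⟩,
        fun a b hab => hfi (congrArg Subtype.val hab)⟩⟩
    rwa [Cardinal.lift_uzero, harr, Cardinal.lift_continuum] at hle
  -- picking points outside small "closures"
  have pick : ∀ C : Set M, IsClosed C → 0 < μ C → ∀ P : Set M, #P < Cardinal.continuum →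
      ∃ x, x ∈ C ∧ φ x ∉ span K (φ '' P) := by
    intro C hC hpos P hP
    by_contra h
    push_neg at h
    have hsub : C ⊆ {m : M | φ m ∈ span K (φ '' P)} := fun m hm => h m hm
    exact absurd ((hbig C hC hpos).trans (Cardinal.mk_le_mk_of_subset hsub))
      (not_le.mpr (stmt7_mk_cl_lt φ hker P hP))

  -- index type: a well-order of type continuum
  have hconti : Cardinal.continuum.{u}.ord ≠ 0 := by
    intro h
    have := Cardinal.card_ord Cardinal.continuum.{u}
    rw [h, Ordinal.card_zero] at this
    exact Cardinal.continuum_ne_zero this.symm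
  haveI hinst : Nonempty (Cardinal.continuum.{u}.ord.ToType) :=
    Ordinal.toType_nonempty_iff_ne_zero.mpr hconti
  -- the collection of closed sets of positive measure has cardinality at most continuum
  haveI : Nonempty {C : Set M // IsClosed C ∧ 0 < μ C} := ⟨⟨Set.univ, isClosed_univ, huniv⟩⟩
  have hCL : #{C : Set M // IsClosed C ∧ 0 < μ C} ≤ Cardinal.continuum := by
    obtain ⟨b, hbc, -, hb⟩ := TopologicalSpace.exists_countable_basis M
    have hJinj : Function.Injective (fun C : {C : Set M // IsClosed C ∧ 0 < μ C} =>
        ({s : b | (s : Set M) ⊆ (C.1)ᶜ} : Set b)) := by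
      intro C1 C2 h
      have hsets : {s ∈ b | s ⊆ (C1.1)ᶜ} = {s ∈ b | s ⊆ (C2.1)ᶜ} := by
        ext t
        simp only [Set.mem_setOf_eq]
        constructor
        · rintro ⟨htb, hts⟩
          exact ⟨htb, (Set.ext_iff.mp h ⟨t, htb⟩).mp hts⟩
        · rintro ⟨htb, hts⟩
          exact ⟨htb, (Set.ext_iff.mp h ⟨t, htb⟩).mpr hts⟩
      have h1 : (C1.1)ᶜ = (C2.1)ᶜ := by
        rw [hb.open_eq_sUnion' C1.2.1.isOpen_compl, hb.open_eq_sUnion' C2.2.1.isOpen_compl, hsets]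
      exact Subtype.ext (compl_injective h1)
    calc #{C : Set M // IsClosed C ∧ 0 < μ C} ≤ #(Set b) := Cardinal.mk_le_of_injective hJinj
      _ = 2 ^ #b := Cardinal.mk_set
      _ ≤ 2 ^ (ℵ₀ : Cardinal.{u}) := by
          apply Cardinal.power_le_power_left two_ne_zero
          rw [Cardinal.mk_le_aleph0_iff]
          exact hbc.to_subtype
      _ = Cardinal.continuum := Cardinal.two_power_aleph0
  -- a surjective enumeration of the closed positive-measure sets
  obtain ⟨emb⟩ : Nonempty ({C : Set M // IsClosed C ∧ 0 < μ C} ↪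
      Cardinal.continuum.{u}.ord.ToType) := by
    rw [← Cardinal.le_def, Cardinal.mk_ord_toType]
    exact hCL
  set σf : Cardinal.continuum.{u}.ord.ToType → {C : Set M // IsClosed C ∧ 0 < μ C} :=
    Function.invFun emb with hσf
  have hσsurj : Function.Surjective σf := Function.invFun_surjective emb.injective
  -- existence of a good pair at each step
  have EX : ∀ (C : {C : Set M // IsClosed C ∧ 0 < μ C}) (P : Set M),
      Cardinal.mk P < Cardinal.continuum →
      ∃ xe : M × M, xe.1 ∈ C.1 ∧ φ xe.1 ∉ span K (φ '' P) ∧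
        φ xe.2 ∉ span K (φ '' insert xe.1 P) := by
    intro C P hP
    obtain ⟨x, hxC, hx⟩ := pick C.1 C.2.1 C.2.2 P hP
    have hP' : #(insert x P : Set M) < Cardinal.continuum := by
      refine lt_of_le_of_lt Cardinal.mk_insert_le ?_
      exact Cardinal.add_lt_of_lt Cardinal.aleph0_le_continuum hP
        (lt_of_lt_of_le Cardinal.one_lt_aleph0 Cardinal.aleph0_le_continuum)
    obtain ⟨e, -, he⟩ := pick Set.univ isClosed_univ huniv (insert x P) hP'
    exact ⟨(x, e), hxC, hx, he⟩
  -- cardinality of initial segments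
  have hseg : ∀ i : Cardinal.continuum.{u}.ord.ToType,
      #((Set.Iio i) × Bool : Type u) < Cardinal.continuum := by
    intro i
    rw [Cardinal.mk_prod, Cardinal.lift_uzero, Cardinal.mk_bool]
    refine Cardinal.mul_lt_of_lt Cardinal.aleph0_le_continuum (Cardinal.mk_Iio_ord_toType i) ?_
    refine lt_of_lt_of_le ?_ Cardinal.aleph0_le_continuum
    rw [Cardinal.lift_ofNat]
    exact_mod_cast Cardinal.nat_lt_aleph0 2
  -- transfinite recursion
  have wfι : WellFounded ((· < ·) : Cardinal.continuum.{u}.ord.ToType →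
      Cardinal.continuum.{u}.ord.ToType → Prop) := wellFounded_lt
  set Fs : ∀ i : Cardinal.continuum.{u}.ord.ToType,
      (∀ j, j < i → M × M) → M × M := fun i rec =>
    (EX (σf i) (Set.range fun jb : (Set.Iio i) × Bool =>
        if jb.2 then (rec jb.1.1 (Set.mem_Iio.mp jb.1.2)).2
        else (rec jb.1.1 (Set.mem_Iio.mp jb.1.2)).1)
      (lt_of_le_of_lt Cardinal.mk_range_le (hseg i))).choose with hFs
  set g : Cardinal.continuum.{u}.ord.ToType → M × M := WellFounded.fix wfι Fs with hg
  set Pv : Cardinal.continuum.{u}.ord.ToType → Set M := fun i =>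
    Set.range fun jb : (Set.Iio i) × Bool =>
      if jb.2 then (g jb.1.1).2 else (g jb.1.1).1 with hPv
  have hPvlt : ∀ i, #(Pv i) < Cardinal.continuum := fun i =>
    lt_of_le_of_lt Cardinal.mk_range_le (hseg i)
  have hgeq : ∀ i, g i = (EX (σf i) (Pv i) (hPvlt i)).choose := by
    intro i
    have h := WellFounded.fix_eq wfι Fs i
    exact h
  have spec : ∀ i, (g i).1 ∈ (σf i).1 ∧ φ ((g i).1) ∉ span K (φ '' Pv i) ∧
      φ ((g i).2) ∉ span K (φ '' insert ((g i).1) (Pv i)) := by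
    intro i
    rw [hgeq i]
    exact (EX (σf i) (Pv i) (hPvlt i)).choose_spec

  -- the family of chosen vectors, indexed lexicographically
  set v : (Cardinal.continuum.{u}.ord.ToType ×ₗ Bool) → V := fun p =>
    if (ofLex p).2 then φ ((g (ofLex p).1).2) else φ ((g (ofLex p).1).1) with hv
  have hmemPv : ∀ i, ∀ j, j < i → (g j).1 ∈ Pv i ∧ (g j).2 ∈ Pv i := by
    intro i j hj
    constructor
    · exact ⟨(⟨j, hj⟩, false), by simp⟩
    · exact ⟨(⟨j, hj⟩, true), by simp⟩
  have hIio : ∀ p, v p ∉ span K (v '' Set.Iio p) := by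
    intro p hp
    rcases hb2 : (ofLex p).2 with _ | _
    · have hsub : v '' Set.Iio p ⊆ φ '' Pv (ofLex p).1 := by
        rintro _ ⟨q, hq, rfl⟩
        rcases (Prod.Lex.lt_iff (x := q) (y := p)).mp hq with hlt | ⟨heq, hlt⟩
        · rcases hbq : (ofLex q).2 with _ | _
          · exact ⟨(g (ofLex q).1).1, (hmemPv _ _ hlt).1, by simp [hv, hbq]⟩
          · exact ⟨(g (ofLex q).1).2, (hmemPv _ _ hlt).2, by simp [hv, hbq]⟩
        · rw [hb2] at hlt
          exact absurd (Bool.lt_iff.mp hlt).2 (by simp)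
      have hvp : v p = φ ((g (ofLex p).1).1) := by simp [hv, hb2]
      apply (spec (ofLex p).1).2.1
      rw [← hvp]
      exact span_mono hsub hp
    · have hsub : v '' Set.Iio p ⊆ φ '' insert ((g (ofLex p).1).1) (Pv (ofLex p).1) := by
        rintro _ ⟨q, hq, rfl⟩
        rcases (Prod.Lex.lt_iff (x := q) (y := p)).mp hq with hlt | ⟨heq, hlt⟩
        · rcases hbq : (ofLex q).2 with _ | _
          · exact ⟨(g (ofLex q).1).1, Set.mem_insert_of_mem _ (hmemPv _ _ hlt).1,
              by simp [hv, hbq]⟩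
          · exact ⟨(g (ofLex q).1).2, Set.mem_insert_of_mem _ (hmemPv _ _ hlt).2,
              by simp [hv, hbq]⟩
        · rw [hb2] at hlt
          have hbq : (ofLex q).2 = false := (Bool.lt_iff.mp hlt).1
          exact ⟨(g (ofLex q).1).1, by rw [heq]; exact Set.mem_insert _ _, by simp [hv, hbq]⟩
      have hvp : v p = φ ((g (ofLex p).1).2) := by simp [hv, hb2]
      apply (spec (ofLex p).1).2.2
      rw [← hvp]
      exact span_mono hsub hp
  have hLI := stmt7_li_of_wf v hIio
  have hnotmem := linearIndependent_iff_notMem_span.mp hLI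
  set X : Set M := Set.range fun i => (g i).1 with hX
  set D : AddSubgroup M := AddSubgroup.closure X with hD
  have hDspan : ∀ m ∈ D, φ m ∈ span K (φ '' X) := by
    intro m hm
    have hle : D ≤ AddSubgroup.comap φ (span K (φ '' X)).toAddSubgroup := by
      rw [hD]
      apply (AddSubgroup.closure_le _).mpr
      intro y hy
      exact Submodule.subset_span (Set.mem_image_of_mem φ hy)
    exact hle hm
  have hXsub : ∀ i, φ '' X ⊆ v '' (Set.univ \ {toLex (i, true)}) := by
    intro i
    rintro _ ⟨m, hmX, rfl⟩
    obtain ⟨k, rfl⟩ := hmX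
    refine ⟨toLex (k, false), ⟨trivial, ?_⟩, by simp [hv]⟩
    intro hcon
    have := congrArg (fun z => (ofLex z).2) hcon
    simp at this
  have heD : ∀ i, (g i).2 ∉ D := by
    intro i hmem
    apply hnotmem (toLex (i, true))
    have h1 : φ ((g i).2) ∈ span K (φ '' X) := hDspan _ hmem
    have h2 : v (toLex (i, true)) = φ ((g i).2) := by simp [hv]
    rw [h2]
    exact span_mono (hXsub i) h1
  have heij : ∀ i j, i ≠ j → (g i).2 - (g j).2 ∉ D := by
    intro i j hij hmem
    apply hnotmem (toLex (i, true))
    have h1 : φ ((g i).2) - φ ((g j).2) ∈ span K (φ '' X) := by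
      rw [← map_sub]
      exact hDspan _ hmem
    have h2 : v (toLex (i, true)) = φ ((g i).2) := by simp [hv]
    have h3 : φ ((g i).2) = (φ ((g i).2) - φ ((g j).2)) + φ ((g j).2) := by abel
    rw [h2, h3]
    refine Submodule.add_mem _ (span_mono (hXsub i) h1) (Submodule.subset_span ?_)
    refine ⟨toLex (j, true), ⟨trivial, ?_⟩, by simp [hv]⟩
    intro hcon
    exact hij (congrArg (fun z => (ofLex z).1) hcon).symm
  -- D meets every closed set of positive measure
  have hhit : ∀ C : Set M, IsClosed C → 0 < μ C → ∃ m, m ∈ D ∧ m ∈ C := by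
    intro C hC hpos
    obtain ⟨i, hi⟩ := hσsurj ⟨C, hC, hpos⟩
    refine ⟨(g i).1, AddSubgroup.subset_closure ⟨i, rfl⟩, ?_⟩
    have h1 := (spec i).1
    rw [hi] at h1
    exact h1
  -- density
  have hdense : Dense (D : Set M) := by
    rw [dense_iff_inter_open]
    intro U hU hUne
    have hUpos : 0 < μ U := hU.measure_pos μ hUne
    obtain ⟨K0, hK0U, hK0c, hK0pos⟩ := hU.measurableSet.exists_lt_isCompact hUpos
    obtain ⟨m, hmD, hmK⟩ := hhit K0 hK0c.isClosed hK0pos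
    exact ⟨m, hK0U hmK, hmD⟩
  -- non-measurability
  obtain ⟨i0⟩ := hinst
  have hnm : ¬ NullMeasurableSet (D : Set M) μ := by
    intro hDm
    have hc0 : μ ((D : Set M)ᶜ) = 0 := by
      by_contra h0
      obtain ⟨T, hTsub, hTm, hTae⟩ := hDm.compl.exists_measurable_subset_ae_eq
      have hTμ : μ T = μ ((D : Set M)ᶜ) := measure_congr hTae
      have hTpos : 0 < μ T := by
        rw [hTμ]
        exact pos_iff_ne_zero.mpr h0
      obtain ⟨K0, hKT, hKc, hKpos⟩ := hTm.exists_lt_isCompact hTpos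
      obtain ⟨m, hmD, hmK⟩ := hhit K0 hKc.isClosed hKpos
      exact (hTsub (hKT hmK)) hmD
    have hD1 : 1 ≤ μ (D : Set M) := by
      have hsub := measure_union_le (μ := μ) (D : Set M) ((D : Set M)ᶜ)
      rw [Set.union_compl_self, hμ, hc0, add_zero] at hsub
      exact hsub
    have hsub2 : ((fun m => (g i0).2 + m) ⁻¹' (D : Set M)) ⊆ ((D : Set M))ᶜ := by
      intro m hm hmD
      refine heD i0 ?_
      have := AddSubgroup.sub_mem D hm hmD
      simpa using this
    have hpre : μ ((fun m => (g i0).2 + m) ⁻¹' (D : Set M)) = μ (D : Set M) :=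
      measure_preimage_add μ _ _
    have hcontr : (1 : ℝ≥0∞) ≤ 0 := by
      calc (1 : ℝ≥0∞) ≤ μ (D : Set M) := hD1
        _ = μ ((fun m => (g i0).2 + m) ⁻¹' (D : Set M)) := hpre.symm
        _ ≤ μ ((D : Set M)ᶜ) := measure_mono hsub2
        _ = 0 := hc0
    simp at hcontr
  -- cardinality of M
  have hMcard : #M = Cardinal.continuum := by
    have hge := hbig Set.univ isClosed_univ huniv
    rw [Cardinal.mk_univ] at hge
    have hnc : ¬ Countable M := by
      intro h
      exact absurd (lt_of_le_of_lt (Cardinal.mk_le_aleph0_iff.mpr h) Cardinal.aleph0_lt_continuum)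
        (not_lt.mpr hge)
    have e := PolishSpace.measurableEquivNatBoolOfNotCountable (α := M) hnc
    have hle : Cardinal.lift.{0} #M = Cardinal.lift.{u} #(ℕ → Bool) :=
      Cardinal.lift_mk_eq'.mpr ⟨e.toEquiv⟩
    rwa [Cardinal.lift_uzero, harr, Cardinal.lift_continuum] at hle
  -- cardinality of the quotient
  have hquot : Cardinal.mk (M ⧸ D) = Cardinal.continuum := by
    apply le_antisymm
    · calc #(M ⧸ D) ≤ #M := Cardinal.mk_le_of_surjective (QuotientAddGroup.mk'_surjective D)
        _ = Cardinal.continuum := hMcard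
    · have hinj : Function.Injective (fun i : Cardinal.continuum.{u}.ord.ToType =>
          ((g i).2 : M ⧸ D)) := by
        intro i j hij2
        by_contra hne
        refine heij i j hne ?_
        exact (QuotientAddGroup.eq_iff_sub_mem).mp hij2
      calc Cardinal.continuum = #(Cardinal.continuum.{u}.ord.ToType) :=
            (Cardinal.mk_ord_toType _).symm
        _ ≤ #(M ⧸ D) := Cardinal.mk_le_of_injective hinj
  exact ⟨D, hdense, hnm, hquot⟩



theorem stmt7 (M : Type*) [AddCommGroup M] [TopologicalSpace M] [IsTopologicalAddGroup M]
    [CompactSpace M] [T2Space M] [TopologicalSpace.MetrizableSpace M] [Infinite M]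
    [MeasurableSpace M] [BorelSpace M]
    (μ : Measure M) [μ.IsAddHaarMeasure] (hμ : μ Set.univ = 1)
    (hcase : Cardinal.mk (AddCommGroup.torsion M) < Cardinal.continuum ∨
      ∃ p : ℕ, p.Prime ∧ ∀ x : M, p • x = 0) :
    ∃ D : AddSubgroup M, Dense (D : Set M) ∧ ¬ NullMeasurableSet (D : Set M) μ ∧
      Cardinal.mk (M ⧸ D) = Cardinal.continuum := by
  classical
  rcases hcase with htor | ⟨p, hp, hpx⟩
  · -- torsion case: localize at the nonzero integers
    haveI : Countable (FractionRing ℤ) :=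
      Countable.of_equiv _ (FractionRing.algEquiv ℤ ℚ).toEquiv.symm
    set φ : M →+ LocalizedModule (nonZeroDivisors ℤ) M :=
      AddMonoidHom.mk' (fun m => LocalizedModule.mkLinearMap (nonZeroDivisors ℤ) M m)
        (fun a b => by simpa using map_add (LocalizedModule.mkLinearMap (nonZeroDivisors ℤ) M) a b)
      with hφ
    refine stmt7_core μ hμ (K := FractionRing ℤ) φ ?_
    have hset : (φ ⁻¹' {0} : Set M) = (AddCommGroup.torsion M : Set M) := by
      ext m
      simp only [Set.mem_preimage, Set.mem_singleton_iff, SetLike.mem_coe, hφ,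
        AddMonoidHom.mk'_apply, LocalizedModule.mkLinearMap_apply]
      rw [AddCommGroup.mem_torsion, isOfFinAddOrder_iff_nsmul_eq_zero]
      constructor
      · intro h
        have h0 : LocalizedModule.mk m (1 : nonZeroDivisors ℤ) = LocalizedModule.mk 0 1 := by
          simpa using h
        rw [LocalizedModule.mk_eq] at h0
        obtain ⟨u, hu⟩ := h0
        have hu' : (u : ℤ) • m = 0 := by simpa [Submonoid.smul_def] using hu
        refine ⟨(u : ℤ).natAbs, Int.natAbs_pos.mpr (nonZeroDivisors.coe_ne_zero u), ?_⟩
        rcases Int.natAbs_eq (u : ℤ) with hh | hh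
        · rw [hh, natCast_zsmul] at hu'
          exact hu'
        · rw [hh, neg_zsmul, neg_eq_zero, natCast_zsmul] at hu'
          exact hu'
      · rintro ⟨n, hn, hnm⟩
        have hne : ((n : ℤ)) ≠ 0 := by exact_mod_cast hn.ne'
        have hmem : (n : ℤ) ∈ nonZeroDivisors ℤ := mem_nonZeroDivisors_of_ne_zero hne
        have h0 : LocalizedModule.mk m (1 : nonZeroDivisors ℤ) = LocalizedModule.mk 0 1 := by
          rw [LocalizedModule.mk_eq]
          refine ⟨⟨(n : ℤ), hmem⟩, ?_⟩
          simp [Submonoid.smul_def, natCast_zsmul, hnm]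
        simpa using h0
    rw [hset]
    exact lt_of_le_of_lt
      (le_of_eq (Cardinal.mk_congr (Equiv.subtypeEquivRight fun x => Iff.rfl))) htor
  · -- bounded exponent case: M is a vector space over ZMod p
    haveI : Fact p.Prime := ⟨hp⟩
    haveI : NeZero p := ⟨hp.ne_zero⟩
    letI : Module (ZMod p) M := AddCommGroup.zmodModule hpx
    refine stmt7_core μ hμ (K := ZMod p) (V := M) (AddMonoidHom.id M) ?_
    have hs : ((AddMonoidHom.id M) ⁻¹' {0} : Set M) = {0} := by
      ext m
      simp
    rw [hs, Cardinal.mk_singleton]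
    exact lt_of_lt_of_le Cardinal.one_lt_aleph0 Cardinal.aleph0_le_continuum
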